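/- arXiv:0806.1236 — 2 statements merged into one kernel-verified Lean document; each statement's English description precedes it below -/
import Mathlib

section
/- Let n and m be positive integers and let ω : T → Bool be any configuration. Then every cycle C of φ_ω has a well-defined homology class: n divides h(C) := #{z ∈ C : ω(z) = true} and m divides v(C) := #{z ∈ C : ω(z) = false}, so C has homology class (p,q) = (h(C)/n, v(C)/m). Moreover any two cycles of φ_ω have the same homology class (p,q), and p and q are relatively prime. -/
open Function Filter

/-- The discrete torus `Z_n × Z_m`. -/
abbrev Torus (n m : ℕ) := ZMod n × ZMod m

/-- The quenched random walk determined by a configuration `ω`: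
`φ_ω(x,y) = (x+1,y)` if `ω(x,y) = true` and `(x,y+1)` otherwise. -/
def step {n m : ℕ} (ω : Torus n m → Bool) (z : Torus n m) : Torus n m :=
  if ω z then (z.1 + 1, z.2) else (z.1, z.2 + 1)

/-- The set of cycles of `step ω`: the orbits of its periodic points. -/
def cycles {n m : ℕ} (ω : Torus n m → Bool) : Set (Set (Torus n m)) :=
  {C | ∃ z ∈ periodicPts (step ω), C = {w | ∃ i : ℕ, (step ω)^[i] z = w}}

/-- `N(ω)`: the total number of distinct cycles of `step ω`. -/
noncomputable def numCycles {n m : ℕ} (ω : Torus n m → Bool) : ℕ :=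
  (cycles ω).ncard

/-- A cycle `C` has homology class `(p, q)`: it contains `n·p` points where `ω` is
`true` (horizontal steps) and `m·q` points where `ω` is `false` (vertical steps). -/
def HasHomology {n m : ℕ} (ω : Torus n m → Bool) (C : Set (Torus n m)) (p q : ℕ) : Prop :=
  {z ∈ C | ω z = true}.ncard = n * p ∧ {z ∈ C | ω z = false}.ncard = m * q

/-- `N_{(p,q)}(ω)`: the number of distinct cycles of `step ω` of homology class `(p, q)`. -/
noncomputable def numCyclesPQ {n m : ℕ} (ω : Torus n m → Bool) (p q : ℕ) : ℕ :=
  {C ∈ cycles ω | HasHomology ω C p q}.ncard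

/-- The probability of an event under the uniform (CRSF) measure on the `2^{nm}`
configurations. -/
noncomputable def prob {n m : ℕ} (A : (Torus n m → Bool) → Prop) : ℝ :=
  ({ω | A ω} : Set (Torus n m → Bool)).ncard / 2 ^ (n * m)

/-- The expectation of a functional under the uniform (CRSF) measure on configurations. -/
noncomputable def expect {n m : ℕ} (f : (Torus n m → Bool) → ℝ) : ℝ :=
  (∑ᶠ ω, f ω) / 2 ^ (n * m)

namespace HomologyAux
variable {n m : ℕ}
def tproj (n m : ℕ) (w : ℤ × ℤ) : Torus n m := ((w.1 : ZMod n), (w.2 : ZMod m))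
def lift (n m : ℕ) (ω : Torus n m → Bool) (w : ℤ × ℤ) : ℤ × ℤ :=
  if ω (tproj n m w) then (w.1 + 1, w.2) else (w.1, w.2 + 1)
lemma tproj_lift (ω : Torus n m → Bool) (w : ℤ × ℤ) :
    tproj n m (lift n m ω w) = step ω (tproj n m w) := by
  unfold lift step tproj
  split <;> simp
lemma tproj_lift_iter (ω : Torus n m → Bool) (w : ℤ × ℤ) (i : ℕ) :
    tproj n m ((lift n m ω)^[i] w) = (step ω)^[i] (tproj n m w) := by
  induction i with
  | zero => rfl
  | succ i ih => rw [Function.iterate_succ_apply', Function.iterate_succ_apply', tproj_lift, ih]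
lemma tproj_add_lattice (w : ℤ × ℤ) (a b : ℤ) :
    tproj n m (w.1 + n * a, w.2 + m * b) = tproj n m w := by
  unfold tproj; push_cast; simp
lemma lift_add_lattice (ω : Torus n m → Bool) (w : ℤ × ℤ) (a b : ℤ) :
    lift n m ω (w.1 + n * a, w.2 + m * b)
      = ((lift n m ω w).1 + n * a, (lift n m ω w).2 + m * b) := by
  unfold lift
  rw [show ((w.1 + n * a, w.2 + m * b) : ℤ × ℤ) = (w.1 + n*a, w.2 + m*b) from rfl,
    tproj_add_lattice w a b]
  split <;> simp <;> ring
lemma lift_fst (ω : Torus n m → Bool) (w : ℤ × ℤ) :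
    (lift n m ω w).1 = w.1 ∨ (lift n m ω w).1 = w.1 + 1 := by
  unfold lift; split <;> simp
lemma lift_fst_eq (ω : Torus n m → Bool) (w : ℤ × ℤ) :
    (lift n m ω w).1 = w.1 + (if ω (tproj n m w) = true then 1 else 0) := by
  unfold lift; split <;> simp_all

lemma lift_level (ω : Torus n m → Bool) (w : ℤ × ℤ) :
    (lift n m ω w).1 + (lift n m ω w).2 = w.1 + w.2 + 1 := by
  unfold lift; split <;> simp <;> ring
lemma lift_iter_level (ω : Torus n m → Bool) (w : ℤ × ℤ) (i : ℕ) :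
    ((lift n m ω)^[i] w).1 + ((lift n m ω)^[i] w).2 = w.1 + w.2 + i := by
  induction i with
  | zero => simp
  | succ i ih => rw [Function.iterate_succ_apply', lift_level]; push_cast; omega
lemma lift_iter_fst_le (ω : Torus n m → Bool) (w : ℤ × ℤ) (i : ℕ) :
    w.1 ≤ ((lift n m ω)^[i] w).1 ∧ ((lift n m ω)^[i] w).1 ≤ w.1 + i := by
  induction i with
  | zero => simp
  | succ i ih =>
    rw [Function.iterate_succ_apply']
    rcases lift_fst ω ((lift n m ω)^[i] w) with h | h <;> rw [h] <;> push_cast <;> omega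

structure PathData (n m : ℕ) (ω : Torus n m → Bool) (C : Set (Torus n m)) where
  G : ℤ → ℤ
  k : ℕ
  p : ℕ
  q : ℕ
  hk : 0 < k
  hkpq : k = n * p + m * q
  step01 : ∀ t, G (t + 1) = G t ∨ G (t + 1) = G t + 1
  per : ∀ t, G (t + k) = G t + n * p
  mem : ∀ t, ((G t : ZMod n), ((t - G t : ℤ) : ZMod m)) ∈ C
  inj : ∀ t s : ℤ, ((G t : ZMod n), ((t - G t : ℤ) : ZMod m))
      = ((G s : ZMod n), ((s - G s : ℤ) : ZMod m)) → (k : ℤ) ∣ (t - s)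
  hom : HasHomology ω C p q

theorem exists_pathData (hn : 0 < n) (hm : 0 < m) (ω : Torus n m → Bool)
    (C : Set (Torus n m)) (hC : C ∈ cycles ω) : Nonempty (PathData n m ω C) := by
  haveI : NeZero n := ⟨hn.ne'⟩
  haveI : NeZero m := ⟨hm.ne'⟩
  obtain ⟨z, hz, rfl⟩ := hC
  set f := step ω with hf
  set k := minimalPeriod f z with hkdef
  have hk : 0 < k := minimalPeriod_pos_of_mem_periodicPts hz
  have hkz : (k : ℤ) ≠ 0 := by positivity
  have hkz' : (0:ℤ) < k := by positivity
  set z' : ℤ × ℤ := ((z.1.val : ℤ), (z.2.val : ℤ)) with hz'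
  have hproj : tproj n m z' = z := by
    unfold tproj
    simp [hz', ZMod.intCast_cast, ZMod.natCast_val, ZMod.cast_id]
  set L := lift n m ω with hL
  have hLk : tproj n m (L^[k] z') = z := by
    rw [hL, tproj_lift_iter, hproj, hkdef, ← hf, iterate_minimalPeriod]
  -- the horizontal displacement over one period is a multiple of n
  have hHk_div : (n : ℤ) ∣ ((L^[k] z').1 - z'.1) := by
    have h2 : (((L^[k] z').1 : ℤ) : ZMod n) = ((z'.1 : ℤ) : ZMod n) := by
      have e1 := congrArg Prod.fst hLk
      have e2 := congrArg Prod.fst hproj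
      simpa [tproj] using e1.trans e2.symm
    have : (((L^[k] z').1 - z'.1 : ℤ) : ZMod n) = 0 := by rw [Int.cast_sub, h2, sub_self]
    exact (ZMod.intCast_zmod_eq_zero_iff_dvd _ _).mp this
  have hVk_div : (m : ℤ) ∣ ((L^[k] z').2 - z'.2) := by
    have h2 : (((L^[k] z').2 : ℤ) : ZMod m) = ((z'.2 : ℤ) : ZMod m) := by
      have e1 := congrArg Prod.snd hLk
      have e2 := congrArg Prod.snd hproj
      simpa [tproj] using e1.trans e2.symm
    have : (((L^[k] z').2 - z'.2 : ℤ) : ZMod m) = 0 := by rw [Int.cast_sub, h2, sub_self]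
    exact (ZMod.intCast_zmod_eq_zero_iff_dvd _ _).mp this
  have hHk_le := lift_iter_fst_le ω z' k
  have hlvl := lift_iter_level ω z' k
  obtain ⟨P, hP⟩ : ∃ P : ℕ, (L^[k] z').1 - z'.1 = n * P := by
    obtain ⟨c, hc⟩ := hHk_div
    have hc0 : 0 ≤ c := by nlinarith [hHk_le.1]
    exact ⟨c.toNat, by rw [hc, Int.toNat_of_nonneg hc0]⟩
  obtain ⟨Q, hQ⟩ : ∃ Q : ℕ, (L^[k] z').2 - z'.2 = m * Q := by
    obtain ⟨c, hc⟩ := hVk_div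
    have hc0 : 0 ≤ c := by nlinarith [hHk_le.2, hlvl]
    exact ⟨c.toNat, by rw [hc, Int.toNat_of_nonneg hc0]⟩
  have hkPQ : (k : ℤ) = n * P + m * Q := by linarith [hP, hQ, hlvl]
  have hkPQn : k = n * P + m * Q := by exact_mod_cast hkPQ
  have periodKey : L^[k] z' = (z'.1 + n * (P:ℤ), z'.2 + m * (Q:ℤ)) := by
    have h1 : (L^[k] z').1 = z'.1 + n * (P:ℤ) := by linarith [hP]
    have h2 : (L^[k] z').2 = z'.2 + m * (Q:ℤ) := by linarith [hQ]
    exact Prod.ext_iff.mpr ⟨h1, h2⟩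
  -- the bi-infinite lifted path
  set pathFn : ℤ → ℤ × ℤ := fun t =>
    ((L^[(t % k).toNat] z').1 + (t / (k:ℤ)) * (n * P),
     (L^[(t % k).toNat] z').2 + (t / (k:ℤ)) * (m * Q)) with hpathFn
  have hmodlt : ∀ t : ℤ, (t % (k:ℤ)).toNat < k := by
    intro t
    have h1 : t % (k:ℤ) < k := Int.emod_lt_of_pos t hkz'
    have h2 : 0 ≤ t % (k:ℤ) := Int.emod_nonneg t hkz
    omega
  have hmodcast : ∀ t : ℤ, ((t % (k:ℤ)).toNat : ℤ) = t % k := fun t =>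
    Int.toNat_of_nonneg (Int.emod_nonneg t hkz)
  have pf_add_k : ∀ t : ℤ, pathFn (t + k)
      = ((pathFn t).1 + n * (P:ℤ), (pathFn t).2 + m * (Q:ℤ)) := by
    intro t
    have e1 : (t + k) % (k:ℤ) = t % k := by simp [Int.add_mul_emod_self_left]
    have e2 : (t + k) / (k:ℤ) = t / k + 1 := by
      have := Int.add_mul_ediv_right t 1 hkz; simpa using this
    simp only [hpathFn, e1, e2, Prod.mk.injEq]
    constructor <;> ring
  have pf_succ : ∀ t : ℤ, pathFn (t + 1) = L (pathFn t) := by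
    intro t
    set r := (t % (k:ℤ)).toNat with hr
    have hrk : r < k := hmodlt t
    have hrc : (r : ℤ) = t % k := hmodcast t
    have hLr : L (pathFn t)
        = ((L^[r+1] z').1 + (t / (k:ℤ)) * (n * P), (L^[r+1] z').2 + (t / (k:ℤ)) * (m * Q)) := by
      have := lift_add_lattice ω (L^[r] z') ((t / (k:ℤ)) * P) ((t / (k:ℤ)) * Q)
      rw [Function.iterate_succ_apply']
      have harr : pathFn t = ((L^[r] z').1 + (n:ℤ) * ((t / (k:ℤ)) * P),
          (L^[r] z').2 + (m:ℤ) * ((t / (k:ℤ)) * Q)) := by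
        simp only [hpathFn, ← hr, Prod.mk.injEq]; constructor <;> ring
      rw [harr, hL, this]
      simp only [Prod.mk.injEq]
      constructor <;> ring
    by_cases hcase : r + 1 < k
    · have e : (t+1) / (k:ℤ) = t / k ∧ (t+1) % (k:ℤ) = (r:ℤ) + 1 := by
        rw [Int.ediv_emod_unique hkz']
        have := Int.mul_ediv_add_emod t (k:ℤ)
        refine ⟨by omega, by omega, by exact_mod_cast (by omega : ((r:ℤ)+1) < (k:ℤ))⟩
      have e3 : ((t+1) % (k:ℤ)).toNat = r + 1 := by have := e.2; omega
      rw [hLr]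
      simp only [hpathFn, e3, e.1]
    · have hrk1 : r + 1 = k := by omega
      have e : (t+1) / (k:ℤ) = t / k + 1 ∧ (t+1) % (k:ℤ) = 0 := by
        rw [Int.ediv_emod_unique hkz']
        have := Int.mul_ediv_add_emod t (k:ℤ)
        have h5 : (k:ℤ) * (t / (k:ℤ) + 1) = (k:ℤ) * (t / (k:ℤ)) + k := by ring
        refine ⟨by omega, by omega, by omega⟩
      have e3 : ((t+1) % (k:ℤ)).toNat = 0 := by have := e.2; omega
      rw [hLr, hrk1, periodKey]
      simp only [hpathFn, e3, e.1, Function.iterate_zero_apply, Prod.mk.injEq]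
      constructor <;> ring
  have proj_pf : ∀ t : ℤ, tproj n m (pathFn t) = f^[(t % (k:ℤ)).toNat] z := by
    intro t
    have : pathFn t = ((L^[(t % (k:ℤ)).toNat] z').1 + (n:ℤ) * ((t / (k:ℤ)) * P),
        (L^[(t % (k:ℤ)).toNat] z').2 + (m:ℤ) * ((t / (k:ℤ)) * Q)) := by
      simp only [hpathFn, Prod.mk.injEq]; constructor <;> ring
    rw [this, tproj_add_lattice, hL, tproj_lift_iter, hproj]
  have level_pf : ∀ t : ℤ, (pathFn t).1 + (pathFn t).2 = z'.1 + z'.2 + t := by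
    intro t
    have h1 := lift_iter_level ω z' (t % (k:ℤ)).toNat
    have h2 := Int.mul_ediv_add_emod t (k:ℤ)
    have h3 := hmodcast t
    simp only [hpathFn]
    rw [show ((L^[(t % (k:ℤ)).toNat] z').1 + t / (k:ℤ) * (n * P))
        + ((L^[(t % (k:ℤ)).toNat] z').2 + t / (k:ℤ) * (m * Q))
        = ((L^[(t % (k:ℤ)).toNat] z').1 + (L^[(t % (k:ℤ)).toNat] z').2)
          + (t / (k:ℤ)) * ((n:ℤ) * P + m * Q) from by ring, h1, ← hkPQ]
    have h4 : (t / (k:ℤ)) * (k:ℤ) = (k:ℤ) * (t / (k:ℤ)) := mul_comm _ _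
    linarith
  set Lv : ℤ := z'.1 + z'.2 with hLv
  have snd_pf : ∀ t : ℤ, (pathFn (t - Lv)).2 = t - (pathFn (t - Lv)).1 := by
    intro t
    linarith [level_pf (t - Lv)]
  have Gpoint : ∀ t : ℤ, (((pathFn (t - Lv)).1 : ZMod n),
      ((t - (pathFn (t - Lv)).1 : ℤ) : ZMod m)) = tproj n m (pathFn (t - Lv)) := by
    intro t
    rw [← snd_pf t]
    rfl
  have memC : ∀ t : ℤ, (((pathFn (t - Lv)).1 : ZMod n),
      ((t - (pathFn (t - Lv)).1 : ℤ) : ZMod m)) ∈ {w | ∃ i : ℕ, f^[i] z = w} := by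
    intro t
    rw [Gpoint, proj_pf]
    exact ⟨_, rfl⟩
  have injC : ∀ t s : ℤ, (((pathFn (t - Lv)).1 : ZMod n),
        ((t - (pathFn (t - Lv)).1 : ℤ) : ZMod m))
      = (((pathFn (s - Lv)).1 : ZMod n), ((s - (pathFn (s - Lv)).1 : ℤ) : ZMod m))
      → (k : ℤ) ∣ (t - s) := by
    intro t s h
    rw [Gpoint, Gpoint, proj_pf, proj_pf] at h
    have h1 : ((t - Lv) % (k:ℤ)).toNat ∈ Set.Iio (minimalPeriod f z) :=
      Set.mem_Iio.mpr (by rw [← hkdef]; exact hmodlt (t - Lv))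
    have h2 : ((s - Lv) % (k:ℤ)).toNat ∈ Set.Iio (minimalPeriod f z) :=
      Set.mem_Iio.mpr (by rw [← hkdef]; exact hmodlt (s - Lv))
    have hr : ((t - Lv) % (k:ℤ)).toNat = ((s - Lv) % (k:ℤ)).toNat :=
      iterate_injOn_Iio_minimalPeriod h1 h2 h
    have hmeq : (t - Lv) % (k:ℤ) = (s - Lv) % (k:ℤ) := by
      have := hmodcast (t - Lv); have := hmodcast (s - Lv); omega
    have hdvd : (k:ℤ) ∣ (s - Lv) - (t - Lv) := Int.ModEq.dvd hmeq
    have hdvd2 : (k:ℤ) ∣ (s - t) := by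
      have he : (s - Lv) - (t - Lv) = s - t := by ring
      rwa [he] at hdvd
    exact (dvd_sub_comm).mp hdvd2
  have step01 : ∀ t : ℤ, (pathFn (t + 1 - Lv)).1 = (pathFn (t - Lv)).1
      ∨ (pathFn (t + 1 - Lv)).1 = (pathFn (t - Lv)).1 + 1 := by
    intro t
    rw [show t + 1 - Lv = (t - Lv) + 1 from by ring, pf_succ, hL]
    exact lift_fst ω (pathFn (t - Lv))
  have per : ∀ t : ℤ, (pathFn (t + k - Lv)).1 = (pathFn (t - Lv)).1 + n * P := by
    intro t
    rw [show t + (k:ℤ) - Lv = (t - Lv) + k from by ring, pf_add_k]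
  -- counting: the homology class
  have hCim : {w | ∃ i : ℕ, f^[i] z = w} = (fun i => f^[i] z) '' (Set.Iio k) := by
    ext w
    constructor
    · rintro ⟨i, rfl⟩
      exact ⟨i % k, Nat.mod_lt _ hk, iterate_mod_minimalPeriod_eq⟩
    · rintro ⟨i, _, rfl⟩
      exact ⟨i, rfl⟩
  have hinjOn : Set.InjOn (fun i => f^[i] z) (Set.Iio k) := by
    rw [hkdef]; exact iterate_injOn_Iio_minimalPeriod
  have hncard : ∀ b : Bool, {w ∈ {w | ∃ i : ℕ, f^[i] z = w} | ω w = b}.ncard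
      = ((Finset.range k).filter (fun i => ω (f^[i] z) = b)).card := by
    intro b
    have hcnt : {w ∈ {w | ∃ i : ℕ, f^[i] z = w} | ω w = b}
        = (fun i => f^[i] z) '' {i | i ∈ Set.Iio k ∧ ω (f^[i] z) = b} := by
      rw [hCim]
      ext w
      simp only [Set.mem_setOf_eq, Set.mem_image, Set.mem_Iio]
      constructor
      · rintro ⟨⟨i, hik, rfl⟩, hb⟩
        exact ⟨i, ⟨hik, hb⟩, rfl⟩
      · rintro ⟨i, ⟨hik, hb⟩, rfl⟩
        exact ⟨⟨i, hik, rfl⟩, hb⟩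
    have hsetFin : {i | i ∈ Set.Iio k ∧ ω (f^[i] z) = b}
        = ↑((Finset.range k).filter (fun i => ω (f^[i] z) = b)) := by
      ext i
      simp [Set.mem_Iio, and_comm]
    rw [hcnt, Set.ncard_image_of_injOn (hinjOn.mono (fun i hi => hi.1)), hsetFin,
      Set.ncard_coe_finset]
  have htrue : ∀ i : ℕ, (((Finset.range i).filter (fun j => ω (f^[j] z) = true)).card : ℤ)
      = (L^[i] z').1 - z'.1 := by
    intro i
    induction i with
    | zero => simp
    | succ i ih =>
      have hstep : (L^[i+1] z').1 = (L^[i] z').1 + (if ω (f^[i] z) = true then 1 else 0) := by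
        rw [Function.iterate_succ_apply', hL, lift_fst_eq]
        rw [show tproj n m ((lift n m ω)^[i] z') = f^[i] z from by
          rw [tproj_lift_iter, hproj]]
      rw [Finset.range_add_one, Finset.filter_insert]
      by_cases hb : ω (f^[i] z) = true
      · rw [if_pos hb, Finset.card_insert_of_notMem (by simp)]
        rw [if_pos hb] at hstep
        push_cast at ih hstep ⊢
        omega
      · rw [if_neg hb]
        rw [if_neg hb] at hstep
        push_cast at ih hstep ⊢
        omega
  have htrueN : ((Finset.range k).filter (fun i => ω (f^[i] z) = true)).card = n * P := by
    have := htrue k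
    rw [hP] at this
    exact_mod_cast this
  have hfalseN : ((Finset.range k).filter (fun i => ω (f^[i] z) = false)).card = m * Q := by
    have hsum : ((Finset.range k).filter (fun i => ω (f^[i] z) = true)).card
        + ((Finset.range k).filter (fun i => ω (f^[i] z) = false)).card = k := by
      have := Finset.card_filter_add_card_filter_not (s := Finset.range k)
        (p := fun i => ω (f^[i] z) = true)
      simpa [Bool.not_eq_true] using this
    omega
  exact ⟨⟨fun t => (pathFn (t - Lv)).1, k, P, Q, hk, hkPQn, step01, per, memC, injC,
    by rw [HasHomology, hncard true, hncard false]; exact ⟨htrueN, hfalseN⟩⟩⟩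

end HomologyAux

/-- A never-zero integer sequence with steps of size ≤ 1 has constant sign. -/
lemma sign_const (f : ℤ → ℤ) (h0 : ∀ t, f t ≠ 0)
    (h1 : ∀ t, f (t + 1) ≤ f t + 1 ∧ f t ≤ f (t + 1) + 1) :
    (∀ t, 0 < f t) ∨ (∀ t, f t < 0) := by
  have key : ∀ t : ℤ, 0 < f t ↔ 0 < f (t + 1) := by
    intro t
    have := h0 t; have := h0 (t + 1); have := h1 t
    omega
  have claim : ∀ t : ℤ, 0 < f t ↔ 0 < f 0 := by
    intro t
    induction t using Int.induction_on with
    | zero => rfl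
    | succ i ih => rw [← key i]; exact ih
    | pred i ih =>
      have := key (-(i:ℤ) - 1)
      rw [show (-(i:ℤ) - 1) + 1 = -(i:ℤ) from by ring] at this
      rw [this]; exact ih
  rcases lt_or_gt_of_ne (h0 0) with h | h
  · right; intro t; have := claim t; have := h0 t; omega
  · left; intro t; exact (claim t).mpr h

/-- A positive sequence with exact periodic drift has zero drift. -/
lemma drift_zero (f : ℤ → ℤ) (K D : ℤ) (hpos : ∀ t, 0 < f t)
    (hper : ∀ t, f (t + K) = f t + D) : D = 0 := by
  have hfor : ∀ j : ℕ, f ((j : ℤ) * K) = f 0 + j * D := by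
    intro j
    induction j with
    | zero => simp
    | succ j ih =>
      have e : ((j + 1 : ℕ) : ℤ) * K = (j : ℤ) * K + K := by push_cast; ring
      rw [e, hper, ih]; push_cast; ring
  have hback : ∀ j : ℕ, f (-(j : ℤ) * K) = f 0 - j * D := by
    intro j
    induction j with
    | zero => simp
    | succ j ih =>
      have e : -((j : ℤ)) * K = -((j + 1 : ℕ) : ℤ) * K + K := by push_cast; ring
      rw [e] at ih
      rw [hper] at ih
      push_cast
      push_cast at ih
      linarith
  by_contra hD
  set j : ℕ := (f 0).toNat with hj
  have hj0 : (j : ℤ) = f 0 := Int.toNat_of_nonneg (le_of_lt (hpos 0))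
  rcases lt_or_gt_of_ne hD with h | h
  · have h1 := hpos ((j : ℤ) * K)
    have h2 := hfor j
    nlinarith
  · have h1 := hpos (-(j : ℤ) * K)
    have h2 := hback j
    nlinarith


namespace HomologyAux
variable {n m : ℕ}

/-- two cycles that share a point are equal -/
lemma cycles_eq_of_mem (ω : Torus n m → Bool) {C₁ C₂ : Set (Torus n m)}
    (h1 : C₁ ∈ cycles ω) (h2 : C₂ ∈ cycles ω) {w : Torus n m}
    (hw1 : w ∈ C₁) (hw2 : w ∈ C₂) : C₁ = C₂ := by
  set f := step ω with hf
  have orbit_eq : ∀ z : Torus n m, z ∈ periodicPts f → ∀ i : ℕ,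
      {u | ∃ j : ℕ, f^[j] z = u} = {u | ∃ j : ℕ, f^[j] (f^[i] z) = u} := by
    intro z hz i
    set k := minimalPeriod f z with hk
    have hkpos : 0 < k := minimalPeriod_pos_of_mem_periodicPts hz
    have hz0 : f^[k] z = z := iterate_minimalPeriod
    have hzki : f^[k * i] z = z := by
      rw [Function.iterate_mul]
      exact Function.iterate_fixed hz0 i
    ext u
    constructor
    · rintro ⟨j, rfl⟩
      refine ⟨j + (k * i - i), ?_⟩
      rw [← Function.iterate_add_apply]
      have he : j + (k * i - i) + i = j + k * i := by
        have : i ≤ k * i := Nat.le_mul_of_pos_left i hkpos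
        omega
      rw [he, Function.iterate_add_apply, hzki]
    · rintro ⟨j, rfl⟩
      exact ⟨j + i, Function.iterate_add_apply f j i z⟩
  obtain ⟨z1, hz1, rfl⟩ := h1
  obtain ⟨z2, hz2, rfl⟩ := h2
  obtain ⟨i1, hi1⟩ := hw1
  obtain ⟨i2, hi2⟩ := hw2
  rw [orbit_eq z1 hz1 i1, hi1, orbit_eq z2 hz2 i2, hi2]

/-- the homology class of any cycle is primitive -/
lemma pathData_coprime (hn : 0 < n) (hm : 0 < m) {ω : Torus n m → Bool}
    {C : Set (Torus n m)} (pd : PathData n m ω C) : Nat.Coprime pd.p pd.q := by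
  by_contra hcop
  set d := Nat.gcd pd.p pd.q with hd
  obtain ⟨p₀, hp₀⟩ : d ∣ pd.p := Nat.gcd_dvd_left _ _
  obtain ⟨q₀, hq₀⟩ : d ∣ pd.q := Nat.gcd_dvd_right _ _
  have hd0 : d ≠ 0 := by
    intro h
    obtain ⟨hp0, hq0⟩ := Nat.gcd_eq_zero_iff.mp (hd ▸ h)
    have hkpq := pd.hkpq
    rw [hp0, hq0] at hkpq
    simp at hkpq
    exact absurd hkpq (by have := pd.hk; omega)
  have hd2 : 2 ≤ d := by
    rcases Nat.lt_or_ge d 2 with h | h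
    · interval_cases d
      · exact absurd rfl hd0
      · exact absurd hd.symm hcop
    · exact h
  set k₀ : ℕ := n * p₀ + m * q₀ with hk₀
  have hkd : pd.k = d * k₀ := by rw [pd.hkpq, hp₀, hq₀, hk₀]; ring
  have hk₀pos : 0 < k₀ := by
    rcases Nat.eq_zero_or_pos k₀ with h | h
    · rw [h, Nat.mul_zero] at hkd
      exact absurd hkd (by have := pd.hk; omega)
    · exact h
  have hk₀lt : k₀ < pd.k := by
    rw [hkd]
    exact lt_mul_left hk₀pos (by omega)
  have hk₀z : ((k₀:ℕ):ℤ) = n * p₀ + m * q₀ := by rw [hk₀]; push_cast; ring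
  set f : ℤ → ℤ := fun t => pd.G t - (pd.G (t - (k₀:ℤ)) + n * p₀) with hf
  have hne : ∀ t, f t ≠ 0 := by
    intro t h
    simp only [hf] at h
    have heq : pd.G t = pd.G (t - (k₀:ℤ)) + n * p₀ := by omega
    have e1 : ((pd.G t : ℤ) : ZMod n) = ((pd.G (t - (k₀:ℤ)) : ℤ) : ZMod n) := by
      rw [heq]; push_cast; simp
    have e2 : ((t - pd.G t : ℤ) : ZMod m)
        = (((t - (k₀:ℤ)) - pd.G (t - (k₀:ℤ)) : ℤ) : ZMod m) := by
      have e : t - pd.G t = ((t - (k₀:ℤ)) - pd.G (t - (k₀:ℤ))) + m * q₀ := by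
        rw [heq]
        have := hk₀z
        ring_nf
        omega
      rw [e]; push_cast; simp
    have hdvd := pd.inj t (t - (k₀:ℤ)) (by rw [e1, e2])
    rw [show t - (t - (k₀:ℤ)) = (k₀:ℤ) from by ring] at hdvd
    have hle := Int.le_of_dvd (by exact_mod_cast hk₀pos) hdvd
    have : pd.k ≤ k₀ := by exact_mod_cast hle
    omega
  have hstep : ∀ t, f (t + 1) ≤ f t + 1 ∧ f t ≤ f (t + 1) + 1 := by
    intro t
    have h1 := pd.step01 t
    have h2 := pd.step01 (t - (k₀:ℤ))
    simp only [hf]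
    rw [show t + 1 - (k₀:ℤ) = (t - (k₀:ℤ)) + 1 from by ring]
    omega
  have hkdz : ((pd.k:ℕ):ℤ) = (d:ℤ) * k₀ := by rw [hkd]; push_cast; ring
  have hpz : (d:ℤ) * ((n:ℤ) * p₀) = (n:ℤ) * pd.p := by rw [hp₀]; push_cast; ring
  have final : ∀ s : ℤ, (0 < f s) → False := by
    intro s hs0
    have hsgn : ∀ t, 0 < f t := by
      rcases sign_const f hne hstep with h | h
      · exact h
      · exact absurd (h s) (by omega)
    have key : ∀ (j : ℕ) (t : ℤ), (j:ℤ) ≤ pd.G t - (pd.G (t - (j:ℤ) * k₀) + (j:ℤ) * ((n:ℤ) * p₀)) := by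
      intro j
      induction j with
      | zero => intro t; simp
      | succ j ih =>
        intro t
        have h1 := ih t
        have h2 := hsgn (t - (j:ℤ) * k₀)
        simp only [hf] at h2
        have e1 : (t - (j:ℤ) * k₀) - (k₀:ℤ) = t - ((j:ℤ) + 1) * k₀ := by ring
        rw [e1] at h2
        have e2 : (((j+1 : ℕ)):ℤ) = (j:ℤ) + 1 := by push_cast; ring
        rw [e2]
        have e3 : ((j:ℤ) + 1) * ((n:ℤ) * p₀) = (j:ℤ) * ((n:ℤ) * p₀) + (n:ℤ) * p₀ := by ring
        linarith
    have h1 := key d 0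
    have hper' := pd.per (0 - (pd.k:ℤ))
    rw [show (0:ℤ) - pd.k + pd.k = 0 from by ring] at hper'
    rw [show (0:ℤ) - (d:ℤ) * k₀ = 0 - (pd.k:ℤ) from by rw [hkdz]] at h1
    have : (2:ℤ) ≤ d := by exact_mod_cast hd2
    linarith
  have final' : ∀ s : ℤ, (f s < 0) → False := by
    intro s hs0
    have hsgn : ∀ t, f t < 0 := by
      rcases sign_const f hne hstep with h | h
      · exact absurd (h s) (by omega)
      · exact h
    have key : ∀ (j : ℕ) (t : ℤ), pd.G t - (pd.G (t - (j:ℤ) * k₀) + (j:ℤ) * ((n:ℤ) * p₀)) ≤ -(j:ℤ) := by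
      intro j
      induction j with
      | zero => intro t; simp
      | succ j ih =>
        intro t
        have h1 := ih t
        have h2 := hsgn (t - (j:ℤ) * k₀)
        simp only [hf] at h2
        have e1 : (t - (j:ℤ) * k₀) - (k₀:ℤ) = t - ((j:ℤ) + 1) * k₀ := by ring
        rw [e1] at h2
        have e2 : (((j+1 : ℕ)):ℤ) = (j:ℤ) + 1 := by push_cast; ring
        rw [e2]
        have e3 : ((j:ℤ) + 1) * ((n:ℤ) * p₀) = (j:ℤ) * ((n:ℤ) * p₀) + (n:ℤ) * p₀ := by ring
        linarith
    have h1 := key d 0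
    have hper' := pd.per (0 - (pd.k:ℤ))
    rw [show (0:ℤ) - pd.k + pd.k = 0 from by ring] at hper'
    rw [show (0:ℤ) - (d:ℤ) * k₀ = 0 - (pd.k:ℤ) from by rw [hkdz]] at h1
    have : (2:ℤ) ≤ d := by exact_mod_cast hd2
    linarith
  rcases lt_or_gt_of_ne (hne 0) with h | h
  · exact final' 0 h
  · exact final 0 h

/-- two disjoint cycles have proportional homology classes -/
lemma pathData_cross (hn : 0 < n) (hm : 0 < m) {ω : Torus n m → Bool}
    {C₁ C₂ : Set (Torus n m)} (h12 : ∀ w, w ∈ C₁ → w ∈ C₂ → False)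
    (pd₁ : PathData n m ω C₁) (pd₂ : PathData n m ω C₂) :
    pd₁.p * pd₂.q = pd₂.p * pd₁.q := by
  set f : ℤ → ℤ := fun t => pd₁.G t - pd₂.G t with hf
  have hne : ∀ t, f t ≠ 0 := by
    intro t h
    simp only [hf] at h
    have heq : pd₁.G t = pd₂.G t := by omega
    have h1 := pd₁.mem t
    have h2 := pd₂.mem t
    rw [heq] at h1
    exact h12 _ h1 h2
  have hstep : ∀ t, f (t + 1) ≤ f t + 1 ∧ f t ≤ f (t + 1) + 1 := by
    intro t
    have h1 := pd₁.step01 t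
    have h2 := pd₂.step01 t
    simp only [hf]
    omega
  have per1 : ∀ (c : ℕ) (t : ℤ), pd₁.G (t + (c:ℤ) * pd₁.k) = pd₁.G t + (c:ℤ) * ((n:ℤ) * pd₁.p) := by
    intro c
    induction c with
    | zero => intro t; simp
    | succ c ih =>
      intro t
      have e : t + ((c+1:ℕ):ℤ) * pd₁.k = (t + (c:ℤ) * pd₁.k) + pd₁.k := by push_cast; ring
      rw [e, pd₁.per, ih]
      push_cast; ring
  have per2 : ∀ (c : ℕ) (t : ℤ), pd₂.G (t + (c:ℤ) * pd₂.k) = pd₂.G t + (c:ℤ) * ((n:ℤ) * pd₂.p) := by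
    intro c
    induction c with
    | zero => intro t; simp
    | succ c ih =>
      intro t
      have e : t + ((c+1:ℕ):ℤ) * pd₂.k = (t + (c:ℤ) * pd₂.k) + pd₂.k := by push_cast; ring
      rw [e, pd₂.per, ih]
      push_cast; ring
  have hKper : ∀ t, f (t + ((pd₁.k * pd₂.k : ℕ):ℤ))
      = f t + ((pd₂.k:ℤ) * ((n:ℤ) * pd₁.p) - (pd₁.k:ℤ) * ((n:ℤ) * pd₂.p)) := by
    intro t
    simp only [hf]
    rw [show ((pd₁.k * pd₂.k : ℕ):ℤ) = (pd₂.k:ℤ) * pd₁.k from by push_cast; ring]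
    rw [per1 pd₂.k t]
    have a2' : pd₂.G (t + (pd₂.k:ℤ) * pd₁.k) = pd₂.G t + (pd₁.k:ℤ) * ((n:ℤ) * pd₂.p) := by
      rw [show t + (pd₂.k:ℤ) * pd₁.k = t + (pd₁.k:ℤ) * pd₂.k from by ring]
      exact per2 pd₁.k t
    rw [a2']
    ring
  have hD : (pd₂.k:ℤ) * ((n:ℤ) * pd₁.p) - (pd₁.k:ℤ) * ((n:ℤ) * pd₂.p) = 0 := by
    rcases sign_const f hne hstep with hs | hs
    · exact drift_zero f _ _ hs hKper
    · have hneg := drift_zero (fun t => - f t) ((pd₁.k * pd₂.k : ℕ):ℤ)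
        (-((pd₂.k:ℤ) * ((n:ℤ) * pd₁.p) - (pd₁.k:ℤ) * ((n:ℤ) * pd₂.p)))
        (fun t => by simp only [neg_pos]; exact hs t)
        (fun t => by rw [hKper t]; ring)
      linarith
  have hnz : (n:ℤ) ≠ 0 := by exact_mod_cast hn.ne'
  have h1 : (pd₂.k:ℤ) * pd₁.p = (pd₁.k:ℤ) * pd₂.p := by
    have hsplit : (n:ℤ) * ((pd₂.k:ℤ) * pd₁.p - (pd₁.k:ℤ) * pd₂.p) = 0 := by
      linear_combination hD
    rcases mul_eq_zero.mp hsplit with h | h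
    · exact absurd h hnz
    · linarith
  have hk1 : ((pd₁.k:ℕ):ℤ) = n * pd₁.p + m * pd₁.q := by
    rw [pd₁.hkpq]; push_cast; ring
  have hk2 : ((pd₂.k:ℕ):ℤ) = n * pd₂.p + m * pd₂.q := by
    rw [pd₂.hkpq]; push_cast; ring
  have h2 : (m:ℤ) * ((pd₁.p:ℤ) * pd₂.q) = (m:ℤ) * ((pd₂.p:ℤ) * pd₁.q) := by
    linear_combination h1 - (pd₁.p:ℤ) * hk2 + (pd₂.p:ℤ) * hk1
  have hmz : (m:ℤ) ≠ 0 := by exact_mod_cast hm.ne'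
  have h3 : (pd₁.p:ℤ) * pd₂.q = (pd₂.p:ℤ) * pd₁.q := mul_left_cancel₀ hmz h2
  exact_mod_cast h3

end HomologyAux

/-- Every cycle has a well-defined homology class `(p,q)` (so `n` divides its number
of horizontal steps and `m` its number of vertical steps), any two cycles have the
same homology class, and `p` and `q` are relatively prime. -/
theorem homology_class_well_defined (n m : ℕ) (hn : 0 < n) (hm : 0 < m)
    (ω : Torus n m → Bool) :
    ∃ p q : ℕ, Nat.Coprime p q ∧ ∀ C ∈ cycles ω, HasHomology ω C p q := by
  classical
  by_cases hex : ∃ C, C ∈ cycles ω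
  · obtain ⟨C₀, hC₀⟩ := hex
    obtain ⟨pd₀⟩ := HomologyAux.exists_pathData hn hm ω C₀ hC₀
    refine ⟨pd₀.p, pd₀.q, HomologyAux.pathData_coprime hn hm pd₀, ?_⟩
    intro C hC
    by_cases hCC : C = C₀
    · rw [hCC]; exact pd₀.hom
    · obtain ⟨pd⟩ := HomologyAux.exists_pathData hn hm ω C hC
      have hdisj : ∀ w, w ∈ C → w ∈ C₀ → False := fun w hw1 hw2 =>
        hCC (HomologyAux.cycles_eq_of_mem ω hC hC₀ hw1 hw2)
      have hcross := HomologyAux.pathData_cross hn hm hdisj pd pd₀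
      have hcop := HomologyAux.pathData_coprime hn hm pd
      have hcop₀ := HomologyAux.pathData_coprime hn hm pd₀
      -- coprime pairs with equal cross products are equal
      have hp : pd.p = pd₀.p := by
        have d1 : pd.p ∣ pd₀.p := by
          have : pd.p ∣ pd₀.p * pd.q := ⟨pd₀.q, hcross.symm⟩
          exact (Nat.Coprime.dvd_of_dvd_mul_right hcop this)
        have d2 : pd₀.p ∣ pd.p := by
          have : pd₀.p ∣ pd.p * pd₀.q := ⟨pd.q, hcross⟩
          exact (Nat.Coprime.dvd_of_dvd_mul_right hcop₀ this)
        exact Nat.dvd_antisymm d1 d2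
      have hq : pd.q = pd₀.q := by
        rcases Nat.eq_zero_or_pos pd.p with hp0 | hp0
        · have hp00 : pd₀.p = 0 := by omega
          have e1 : pd.q = 1 := by
            have := hcop
            rw [Nat.Coprime, hp0] at this
            simpa using this
          have e2 : pd₀.q = 1 := by
            have := hcop₀
            rw [Nat.Coprime, hp00] at this
            simpa using this
          rw [e1, e2]
        · exact Nat.eq_of_mul_eq_mul_left hp0 (by rw [hcross, hp])
      have := pd.hom
      rw [hp, hq] at this
      exact this
  · exact ⟨1, 1, Nat.coprime_one_left 1, fun C hC => absurd ⟨C, hC⟩ hex⟩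
end

section
/- Fix ρ > 0 and let m : ℕ → ℕ be a sequence with (m(n) − n)/√n → ρ as n → ∞. Then there exists C > 0 such that for all sufficiently large n, on the torus T = (ZMod n) × (ZMod m(n)), the probability that N_{(1,1)}(ω) > C·n^{1/2} is at most exp(−C^{−1}·n^{1/2}). -/
open Function Filter

def orb {α : Type*} (f : α → α) (z : α) : Set α := {w | ∃ i : ℕ, f^[i] z = w}

section OrbLemmas
variable {α : Type*} {f : α → α} {z w : α}

lemma orb_eq_image (hz : z ∈ periodicPts f) :
    orb f z = (f^[·] z) '' Set.Iio (minimalPeriod f z) := by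
  ext w
  constructor
  · rintro ⟨i, rfl⟩
    exact ⟨i % minimalPeriod f z,
      Nat.mod_lt _ (minimalPeriod_pos_of_mem_periodicPts hz),
      iterate_mod_minimalPeriod_eq⟩
  · rintro ⟨i, _, rfl⟩; exact ⟨i, rfl⟩

lemma ncard_orb (hz : z ∈ periodicPts f) : (orb f z).ncard = minimalPeriod f z := by
  rw [orb_eq_image hz, Set.ncard_image_of_injOn iterate_injOn_Iio_minimalPeriod,
    Set.ncard_eq_toFinset_card']
  simp

lemma iterate_mem_periodicPts (hz : z ∈ periodicPts f) (i : ℕ) :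
    f^[i] z ∈ periodicPts f := by
  rw [← minimalPeriod_pos_iff_mem_periodicPts, minimalPeriod_apply_iterate hz]
  exact minimalPeriod_pos_of_mem_periodicPts hz

lemma orb_iterate (hz : z ∈ periodicPts f) (i : ℕ) : orb f (f^[i] z) = orb f z := by
  ext u
  constructor
  · rintro ⟨j, rfl⟩; exact ⟨j + i, by rw [Function.iterate_add_apply]⟩
  · rintro ⟨a, rfl⟩
    obtain ⟨d, hd, hpd⟩ := mem_periodicPts.1 hz
    refine ⟨a + (i * d - i), ?_⟩
    rw [← Function.iterate_add_apply]
    have : i * d - i + i = i * d := Nat.sub_add_cancel (Nat.le_mul_of_pos_right i hd)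
    rw [add_assoc, this, Function.iterate_add_apply, (hpd.const_mul i).eq]

lemma orb_mem_eq (hz : z ∈ periodicPts f) (hw : w ∈ orb f z) : orb f w = orb f z := by
  obtain ⟨i, rfl⟩ := hw; exact orb_iterate hz i

lemma mem_orb_self (f : α → α) (z : α) : z ∈ orb f z := ⟨0, rfl⟩
end OrbLemmas

/-- distinct cycles are disjoint -/
lemma cycles_disjoint {n m : ℕ} (ω : Torus n m → Bool) {C₁ C₂ : Set (Torus n m)}
    (h₁ : C₁ ∈ cycles ω) (h₂ : C₂ ∈ cycles ω) (hne : C₁ ≠ C₂) : Disjoint C₁ C₂ := by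
  obtain ⟨z₁, hz₁, rfl⟩ := h₁
  obtain ⟨z₂, hz₂, rfl⟩ := h₂
  rw [Set.disjoint_left]
  intro w hw₁ hw₂
  exact hne (((orb_mem_eq hz₁ hw₁).symm.trans (orb_mem_eq hz₂ hw₂)))

-- candidates
def dstep {n m : ℕ} (b : Bool) (z : Torus n m) : Torus n m :=
  if b then (z.1 + 1, z.2) else (z.1, z.2 + 1)

abbrev Cand (n m : ℕ) := ZMod m × (Fin (n + m) → Bool)

def bfun {n m : ℕ} (c : Cand n m) (i : ℕ) : Bool :=
  if h : i < n + m then c.2 ⟨i, h⟩ else false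

def cpath {n m : ℕ} (c : Cand n m) : ℕ → Torus n m
  | 0 => (0, c.1)
  | i + 1 => dstep (bfun c i) (cpath c i)

lemma step_eq_dstep {n m : ℕ} (ω : Torus n m → Bool) (z : Torus n m) :
    step ω z = dstep (ω z) z := rfl

def cnt {n m : ℕ} (ω : Torus n m → Bool) (z₀ : Torus n m) (i : ℕ) : ℕ :=
  ((Finset.range i).filter (fun j => ω ((step ω)^[j] z₀) = true)).card

lemma cnt_succ {n m : ℕ} (ω : Torus n m → Bool) (z₀ : Torus n m) (i : ℕ) :
    cnt ω z₀ (i + 1) = cnt ω z₀ i + (if ω ((step ω)^[i] z₀) = true then 1 else 0) := by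
  unfold cnt
  rw [Finset.range_add_one, Finset.filter_insert]
  split
  · rw [Finset.card_insert_of_notMem (by simp)]
  · simp

lemma xcoord {n m : ℕ} (ω : Torus n m → Bool) (z₀ : Torus n m) (i : ℕ) :
    ((step ω)^[i] z₀).1 = z₀.1 + (cnt ω z₀ i : ZMod n) := by
  induction i with
  | zero => simp [cnt]
  | succ i ih =>
    rw [Function.iterate_succ_apply', cnt_succ, step]
    split
    · push_cast
      rw [ih]; ring
    · simpa using ih

/-- counting trues along one full period equals ncard of trues in the orbit -/
lemma cnt_minimalPeriod {n m : ℕ} (ω : Torus n m → Bool) {z₀ : Torus n m}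
    (hz : z₀ ∈ periodicPts (step ω)) :
    cnt ω z₀ (minimalPeriod (step ω) z₀) = {w ∈ orb (step ω) z₀ | ω w = true}.ncard := by
  set f := step ω
  set d := minimalPeriod f z₀
  have himg : {w ∈ orb f z₀ | ω w = true} = (f^[·] z₀) '' {j ∈ Set.Iio d | ω (f^[j] z₀) = true} := by
    rw [orb_eq_image hz]
    ext w
    constructor
    · rintro ⟨⟨j, hj, rfl⟩, hw⟩
      exact ⟨j, ⟨hj, hw⟩, rfl⟩
    · rintro ⟨j, ⟨hj, hw⟩, rfl⟩
      exact ⟨⟨j, hj, rfl⟩, hw⟩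
  rw [himg, Set.ncard_image_of_injOn
    (iterate_injOn_Iio_minimalPeriod.mono (Set.sep_subset _ _))]
  have : {j ∈ Set.Iio d | ω (f^[j] z₀) = true}
      = ↑((Finset.range d).filter (fun j => ω (f^[j] z₀) = true)) := by
    ext j; simp [Set.mem_sep_iff]
  rw [this, Set.ncard_coe_finset]
  rfl

/-- staircase intermediate value -/
lemma stair {g : ℕ → ℕ} (h0 : g 0 = 0) (h1 : ∀ i, g (i + 1) ≤ g i + 1)
    {r M : ℕ} (hr : r ≤ g M) : ∃ i, g i = r := by
  induction M with
  | zero => exact ⟨0, by omega⟩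
  | succ M ih =>
    by_cases h : r ≤ g M
    · exact ih h
    · exact ⟨M + 1, by have := h1 M; omega⟩

lemma orb_spec {n m : ℕ} (ω : Torus n m → Bool) (z : Torus n m) :
    {w | ∃ i : ℕ, (step ω)^[i] z = w} = orb (step ω) z := rfl

lemma cycle_extract {n m : ℕ} [NeZero n] [NeZero m] (ω : Torus n m → Bool)
    {C : Set (Torus n m)} (hC : C ∈ cycles ω) (hH : HasHomology ω C 1 1) :
    ∃ c : Cand n m,
      ((Finset.univ.filter (fun i : Fin (n + m) => c.2 i = true)).card = n) ∧
      Set.InjOn (cpath c) (Set.Iio (n + m)) ∧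
      cpath c '' Set.Iio (n + m) = C ∧
      ∀ i < n + m, ω (cpath c i) = bfun c i := by
  classical
  obtain ⟨z, hz, rfl⟩ := hC
  rw [orb_spec] at hH ⊢
  set f := step ω with hf
  -- cardinality of the cycle
  have hsplit : orb f z = {w ∈ orb f z | ω w = true} ∪ {w ∈ orb f z | ω w = false} := by
    ext w; by_cases h : ω w = true <;> simp [h, Set.mem_sep_iff] <;> tauto
  have hcard : (orb f z).ncard = n + m := by
    rw [hsplit, Set.ncard_union_eq ?_ (Set.toFinite _) (Set.toFinite _), hH.1, hH.2,
      mul_one, mul_one]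
    rw [Set.disjoint_left]
    rintro w ⟨-, hw⟩ ⟨-, hw'⟩
    simp [hw] at hw'
  have hd : minimalPeriod f z = n + m := by rw [← ncard_orb hz, hcard]
  -- find a point on column 0
  have hcnt : cnt ω z (n + m) = n := by
    have := cnt_minimalPeriod ω hz
    rw [hd, hH.1, mul_one] at this
    exact this
  obtain ⟨i, hi⟩ : ∃ i, cnt ω z i = (-z.1 : ZMod n).val := by
    refine stair (M := n + m) (by simp [cnt]) (fun i => by rw [cnt_succ]; split <;> omega) ?_
    rw [hcnt]
    exact le_of_lt (ZMod.val_lt _)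
  set z₀ := f^[i] z with hz₀
  have hx0 : z₀.1 = 0 := by
    rw [hz₀, xcoord, hi, ZMod.natCast_val, ZMod.cast_id]
    ring
  have hz₀p : z₀ ∈ periodicPts f := iterate_mem_periodicPts hz i
  have horb : orb f z₀ = orb f z := orb_iterate hz i
  have hd₀ : minimalPeriod f z₀ = n + m := by
    rw [hz₀, minimalPeriod_apply_iterate hz, hd]
  set c : Cand n m := (z₀.2, fun j => ω (f^[(j : ℕ)] z₀)) with hc
  have hb : ∀ j < n + m, bfun c j = ω (f^[j] z₀) := by
    intro j hj
    rw [hc, bfun, dif_pos hj]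
  have hpath : ∀ j ≤ n + m, cpath c j = f^[j] z₀ := by
    intro j hj
    induction j with
    | zero =>
      show ((0 : ZMod n), z₀.2) = z₀
      rw [← hx0]
    | succ j ih =>
      show dstep (bfun c j) (cpath c j) = f^[j + 1] z₀
      rw [hb j (by omega), ih (by omega), Function.iterate_succ_apply', hf, step_eq_dstep]
  have hcnt₀ : cnt ω z₀ (n + m) = n := by
    have := cnt_minimalPeriod ω hz₀p
    rw [hd₀, horb, hH.1, mul_one] at this
    exact this
  refine ⟨c, ?_, ?_, ?_, ?_⟩
  · -- number of trues
    rw [Finset.card_filter, Fin.sum_univ_eq_sum_range (fun j => if ω (f^[j] z₀) = true then 1 else 0),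
      ← Finset.card_filter]
    exact hcnt₀
  · -- injectivity
    intro a ha b hb' hab
    have := iterate_injOn_Iio_minimalPeriod (f := f) (x := z₀)
    rw [hd₀] at this
    exact this ha hb' ((hpath a ha.le).symm.trans (hab.trans (hpath b hb'.le)))
  · -- image
    have : Set.EqOn (cpath c) (f^[·] z₀) (Set.Iio (n + m)) := fun j hj => hpath j (le_of_lt hj)
    rw [Set.image_congr this, ← hd₀, ← orb_eq_image hz₀p, horb]
  · -- omega values
    intro j hj
    rw [hpath j (le_of_lt hj), hb j hj]

section Counting
variable {n m k : ℕ} [NeZero n] [NeZero m]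

def pts (c : Cand n m) : Finset (Torus n m) := (Finset.range (n + m)).image (cpath c)

lemma coe_pts (c : Cand n m) : (pts c : Set (Torus n m)) = cpath c '' Set.Iio (n + m) := by
  rw [pts, Finset.coe_image, Finset.coe_range]

def good (c : Cand n m) : Prop :=
  (Finset.univ.filter (fun i : Fin (n + m) => c.2 i = true)).card = n

instance : DecidablePred (good (n := n) (m := m)) := fun _ => by unfold good; infer_instance

open Classical in
noncomputable def fams (n m k : ℕ) [NeZero n] [NeZero m] : Finset (Finset (Cand n m)) :=
  Finset.univ.filter (fun T => T.card = k ∧ (∀ c ∈ T, good c) ∧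
    (∀ c ∈ T, (pts c).card = n + m) ∧
    (∀ c ∈ T, ∀ c' ∈ T, c ≠ c' → Disjoint (pts c) (pts c')))

lemma mem_fams {T : Finset (Cand n m)} : T ∈ fams n m k ↔
    (T.card = k ∧ (∀ c ∈ T, good c) ∧
    (∀ c ∈ T, (pts c).card = n + m) ∧
    (∀ c ∈ T, ∀ c' ∈ T, c ≠ c' → Disjoint (pts c) (pts c'))) := by
  classical
  rw [fams, Finset.mem_filter]
  simp

def ev (T : Finset (Cand n m)) : Finset (Torus n m → Bool) :=
  Finset.univ.filter (fun ω => ∀ c ∈ T, ∀ i < n + m, ω (cpath c i) = bfun c i)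

lemma card_ev {T : Finset (Cand n m)} (hT : T ∈ fams n m k) :
    (ev T).card * 2 ^ (k * (n + m)) ≤ 2 ^ (n * m) := by
  classical
  obtain ⟨hcard, -, hpts, hdisj⟩ := mem_fams.1 hT
  set P : Finset (Torus n m) := T.biUnion pts with hP
  have hPcard : P.card = k * (n + m) := by
    rw [hP, Finset.card_biUnion hdisj]
    rw [Finset.sum_congr rfl hpts, Finset.sum_const, hcard, smul_eq_mul]
  have hinj : Set.InjOn (fun (ω : Torus n m → Bool) (x : ↥(Pᶜ : Finset (Torus n m))) => ω x.1) ↑(ev T) := by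
    intro ω hω ω' hω' hee
    simp only [ev, Finset.coe_filter, Set.mem_setOf_eq, Finset.mem_univ, true_and] at hω hω'
    funext z
    by_cases hz : z ∈ P
    · rw [hP, Finset.mem_biUnion] at hz
      obtain ⟨c, hc, hzc⟩ := hz
      rw [pts, Finset.mem_image] at hzc
      obtain ⟨i, hi, rfl⟩ := hzc
      rw [Finset.mem_range] at hi
      rw [hω c hc i hi, hω' c hc i hi]
    · exact congrFun hee ⟨z, Finset.mem_compl.2 hz⟩
  have hle : (ev T).card ≤ 2 ^ (n * m - k * (n + m)) := by
    have := Finset.card_le_card_of_injOn _ (fun ω _ => Finset.mem_univ _) hinj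
    rw [Finset.card_univ, Fintype.card_fun, Fintype.card_bool, Fintype.card_coe,
      Finset.card_compl] at this
    have hcardT : Fintype.card (Torus n m) = n * m := by
      rw [Fintype.card_prod, ZMod.card, ZMod.card]
    rwa [hcardT, hPcard] at this
  have hle2 : k * (n + m) ≤ n * m := by
    have := Finset.card_le_univ P
    rw [hPcard, Fintype.card_prod, ZMod.card, ZMod.card] at this
    exact this
  calc (ev T).card * 2 ^ (k * (n + m)) ≤ 2 ^ (n * m - k * (n + m)) * 2 ^ (k * (n + m)) :=
        Nat.mul_le_mul_right _ hle
    _ = 2 ^ (n * m) := by rw [← pow_add, Nat.sub_add_cancel hle2]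

lemma card_fams : (fams n m k).card ≤ (m * (n + m).choose n).choose k := by
  classical
  have hsub : fams n m k ⊆ (Finset.univ.filter good).powersetCard k := by
    intro T hT
    obtain ⟨hcard, hgood, -, -⟩ := mem_fams.1 hT
    rw [Finset.mem_powersetCard]
    exact ⟨fun c hc => by simpa using hgood c hc, hcard⟩
  have h1 := Finset.card_le_card hsub
  rw [Finset.card_powersetCard] at h1
  refine h1.trans (Nat.choose_le_choose k ?_)
  -- count good candidates
  have hinj : Set.InjOn
      (fun c : Cand n m => (c.1, Finset.univ.filter (fun i => c.2 i = true)))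
      ↑(Finset.univ.filter (good (n := n) (m := m))) := by
    intro c _ c' _ h
    obtain ⟨h1, h2⟩ := Prod.mk.injEq .. ▸ h
    refine Prod.ext h1 (funext fun i => ?_)
    have := Finset.ext_iff.1 h2 i
    simp only [Finset.mem_filter, Finset.mem_univ, true_and] at this
    cases hb : c.2 i
    · cases hb' : c'.2 i
      · rfl
      · exact absurd (this.2 hb') (by simp [hb])
    · exact (this.1 hb).symm
  have hmaps : ∀ c ∈ Finset.univ.filter (good (n := n) (m := m)),
      (c.1, Finset.univ.filter (fun i => c.2 i = true)) ∈
        (Finset.univ : Finset (ZMod m)) ×ˢ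
          Finset.powersetCard n (Finset.univ : Finset (Fin (n + m))) := by
    intro c hc
    simp only [Finset.mem_filter, Finset.mem_univ, true_and] at hc
    refine Finset.mem_product.2 ⟨Finset.mem_univ _, ?_⟩
    rw [Finset.mem_powersetCard]
    exact ⟨Finset.subset_univ _, hc⟩
  have := Finset.card_le_card_of_injOn _ hmaps hinj
  rwa [Finset.card_product, Finset.card_univ, ZMod.card, Finset.card_powersetCard,
    Finset.card_univ, Fintype.card_fin] at this
end Counting

lemma count_main (n m k : ℕ) [NeZero n] [NeZero m] :
    {ω : Torus n m → Bool | k ≤ numCyclesPQ ω 1 1}.ncard * 2 ^ (k * (n + m))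
      ≤ (m * (n + m).choose n).choose k * 2 ^ (n * m) := by
  classical
  set A := {ω : Torus n m → Bool | k ≤ numCyclesPQ ω 1 1} with hA
  have hcover : A.toFinset ⊆ (fams n m k).biUnion ev := by
    intro ω hω
    rw [Set.mem_toFinset, hA, Set.mem_setOf_eq] at hω
    set S := {C | C ∈ cycles ω ∧ HasHomology ω C 1 1} with hS
    have hSfin : S.Finite := Set.toFinite S
    -- choice function
    have hex : ∀ C ∈ S, ∃ c : Cand n m,
        good c ∧ Set.InjOn (cpath c) (Set.Iio (n + m)) ∧
        cpath c '' Set.Iio (n + m) = C ∧ ∀ i < n + m, ω (cpath c i) = bfun c i := by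
      rintro C ⟨hC, hH⟩
      exact cycle_extract ω hC hH
    set g : Set (Torus n m) → Cand n m := fun C =>
      if h : ∃ c : Cand n m,
        good c ∧ Set.InjOn (cpath c) (Set.Iio (n + m)) ∧
        cpath c '' Set.Iio (n + m) = C ∧ ∀ i < n + m, ω (cpath c i) = bfun c i
      then h.choose else Classical.arbitrary _ with hg
    have hgspec : ∀ C ∈ S, good (g C) ∧ Set.InjOn (cpath (g C)) (Set.Iio (n + m)) ∧
        cpath (g C) '' Set.Iio (n + m) = C ∧ ∀ i < n + m, ω (cpath (g C) i) = bfun (g C) i := by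
      intro C hC
      have h := hex C hC
      rw [hg]
      simp only [dif_pos h]
      exact h.choose_spec
    have hginj : Set.InjOn g S := by
      intro C hC C' hC' hgg
      rw [← (hgspec C hC).2.2.1, ← (hgspec C' hC').2.2.1, hgg]
    set T₁ := hSfin.toFinset.image g with hT₁
    have hT₁card : k ≤ T₁.card := by
      rw [hT₁, Finset.card_image_of_injOn (by
        intro a ha b hb; exact hginj (hSfin.mem_toFinset.1 ha) (hSfin.mem_toFinset.1 hb))]
      rw [← Set.ncard_eq_toFinset_card S hSfin]
      rw [numCyclesPQ] at hω
      exact hω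
    obtain ⟨T, hTsub, hTcard⟩ := Finset.exists_subset_card_eq hT₁card
    have hmem : ∀ c ∈ T, ∃ C ∈ S, g C = c := by
      intro c hc
      have := hTsub hc
      rw [hT₁, Finset.mem_image] at this
      obtain ⟨C, hC, rfl⟩ := this
      exact ⟨C, hSfin.mem_toFinset.1 hC, rfl⟩
    rw [Finset.mem_biUnion]
    refine ⟨T, ?_, ?_⟩
    · rw [mem_fams]
      refine ⟨hTcard, ?_, ?_, ?_⟩
      · intro c hc
        obtain ⟨C, hC, rfl⟩ := hmem c hc
        exact (hgspec C hC).1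
      · intro c hc
        obtain ⟨C, hC, rfl⟩ := hmem c hc
        rw [pts, Finset.card_image_of_injOn (by
          rw [Finset.coe_range]; exact (hgspec C hC).2.1), Finset.card_range]
      · intro c hc c' hc' hne
        obtain ⟨C, hC, rfl⟩ := hmem c hc
        obtain ⟨C', hC', rfl⟩ := hmem c' hc'
        have hCC : C ≠ C' := fun h => hne (by rw [h])
        have hdisj := cycles_disjoint ω hC.1 hC'.1 hCC
        rw [← Finset.disjoint_coe, coe_pts, coe_pts, (hgspec C hC).2.2.1,
          (hgspec C' hC').2.2.1]
        exact hdisj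
    · rw [ev, Finset.mem_filter]
      refine ⟨Finset.mem_univ _, fun c hc i hi => ?_⟩
      obtain ⟨C, hC, rfl⟩ := hmem c hc
      exact (hgspec C hC).2.2.2 i hi
  have h1 : A.ncard ≤ ∑ T ∈ fams n m k, (ev T).card := by
    rw [Set.ncard_eq_toFinset_card']
    exact (Finset.card_le_card hcover).trans (Finset.card_biUnion_le)
  calc A.ncard * 2 ^ (k * (n + m)) ≤ (∑ T ∈ fams n m k, (ev T).card) * 2 ^ (k * (n + m)) :=
        Nat.mul_le_mul_right _ h1
    _ = ∑ T ∈ fams n m k, (ev T).card * 2 ^ (k * (n + m)) := by rw [Finset.sum_mul]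
    _ ≤ ∑ _T ∈ fams n m k, 2 ^ (n * m) := Finset.sum_le_sum (fun T hT => card_ev hT)
    _ = (fams n m k).card * 2 ^ (n * m) := by rw [Finset.sum_const, smul_eq_mul]
    _ ≤ (m * (n + m).choose n).choose k * 2 ^ (n * m) :=
        Nat.mul_le_mul_right _ card_fams

lemma sqrt_helper {a b x y : ℝ} (ha : 0 ≤ a) (hb : 0 ≤ b) (h : a ^ 2 * x ≤ b ^ 2 * y) :
    a * Real.sqrt x ≤ b * Real.sqrt y := by
  by_cases hx : 0 ≤ x
  · calc a * Real.sqrt x = Real.sqrt (a ^ 2 * x) := by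
          rw [Real.sqrt_mul (sq_nonneg a), Real.sqrt_sq ha]
      _ ≤ Real.sqrt (b ^ 2 * y) := Real.sqrt_le_sqrt h
      _ = b * Real.sqrt y := by rw [Real.sqrt_mul (sq_nonneg b), Real.sqrt_sq hb]
  · rw [Real.sqrt_eq_zero_of_nonpos (le_of_not_ge hx), mul_zero]
    positivity

lemma cb_bound : ∀ s : ℕ, (Nat.centralBinom s : ℝ) * Real.sqrt (3 * s + 1) ≤ 4 ^ s := by
  intro s
  induction s with
  | zero => simp [Nat.centralBinom]
  | succ s ih =>
    have hpos : (0 : ℝ) < (s : ℝ) + 1 := by positivity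
    rw [← mul_le_mul_iff_right₀ hpos]
    have hrec : ((s : ℝ) + 1) * (Nat.centralBinom (s + 1) : ℝ)
        = 2 * (2 * s + 1) * (Nat.centralBinom s : ℝ) := by
      have := Nat.succ_mul_centralBinom_succ s
      have := congrArg (fun x : ℕ => (x : ℝ)) this
      push_cast at this
      linarith
    have hcb : (0 : ℝ) ≤ (Nat.centralBinom s : ℝ) := by positivity
    have hkey : (2 * (2 * (s : ℝ) + 1)) * Real.sqrt (3 * (s + 1) + 1)
        ≤ (4 * ((s : ℝ) + 1)) * Real.sqrt (3 * s + 1) := by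
      apply sqrt_helper (by positivity) (by positivity)
      push_cast
      nlinarith [sq_nonneg ((s : ℝ))]
    calc ((s : ℝ) + 1) * ((Nat.centralBinom (s + 1) : ℝ) * Real.sqrt (3 * ↑(s + 1) + 1))
        = (Nat.centralBinom s : ℝ) * ((2 * (2 * (s : ℝ) + 1)) * Real.sqrt (3 * (s + 1) + 1)) := by
          push_cast [← mul_assoc, hrec]
          push_cast at hrec ⊢
          nlinarith [hrec]
      _ ≤ (Nat.centralBinom s : ℝ) * ((4 * ((s : ℝ) + 1)) * Real.sqrt (3 * s + 1)) := by
          apply mul_le_mul_of_nonneg_left hkey hcb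
      _ = (4 * ((s : ℝ) + 1)) * ((Nat.centralBinom s : ℝ) * Real.sqrt (3 * s + 1)) := by ring
      _ ≤ (4 * ((s : ℝ) + 1)) * 4 ^ s := by
          apply mul_le_mul_of_nonneg_left ih (by positivity)
      _ = ((s : ℝ) + 1) * 4 ^ (s + 1) := by ring

lemma choose_mid (N : ℕ) : ((N.choose (N / 2) : ℝ)) * Real.sqrt N ≤ 2 * 2 ^ N := by
  rcases Nat.even_or_odd N with ⟨s, rfl⟩ | ⟨s, rfl⟩
  · have h2 : (s + s) / 2 = s := by omega
    rw [h2]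
    have : (s + s).choose s = Nat.centralBinom s := by rw [Nat.centralBinom, two_mul]
    rw [this]
    push_cast
    calc (Nat.centralBinom s : ℝ) * Real.sqrt ((s : ℝ) + s)
        ≤ (Nat.centralBinom s : ℝ) * Real.sqrt (3 * s + 1) := by
          apply mul_le_mul_of_nonneg_left (Real.sqrt_le_sqrt (by push_cast; linarith))
            (by positivity)
      _ ≤ 4 ^ s := cb_bound s
      _ ≤ 2 * 2 ^ (s + s) := by
          have h4 : (2 : ℝ) ^ (s + s) = 4 ^ s := by
            rw [← two_mul, pow_mul]; norm_num
          rw [h4]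
          nlinarith [pow_pos (by norm_num : (0:ℝ) < 4) s]
  · have h2 : (2 * s + 1) / 2 = s := by omega
    rw [h2]
    have hch : (2 * s + 1).choose s ≤ 2 * Nat.centralBinom s := by
      rcases s with - | t
      · simp [Nat.centralBinom]
      · have : (2 * (t + 1) + 1) = (2 * (t + 1)) + 1 := rfl
        have hpas : (2 * (t + 1) + 1).choose (t + 1)
            = (2 * (t + 1)).choose t + (2 * (t + 1)).choose (t + 1) :=
          Nat.choose_succ_succ _ _
        have hmid : (2 * (t + 1)).choose t ≤ (2 * (t + 1)).choose (t + 1) := by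
          have := Nat.choose_le_middle t (2 * (t + 1))
          have h3 : 2 * (t + 1) / 2 = t + 1 := by omega
          rwa [h3] at this
        rw [Nat.centralBinom]
        omega
    push_cast
    calc ((2 * s + 1).choose s : ℝ) * Real.sqrt (2 * (s : ℝ) + 1)
        ≤ (2 * Nat.centralBinom s : ℝ) * Real.sqrt (3 * s + 1) := by
          apply mul_le_mul (by exact_mod_cast hch) (Real.sqrt_le_sqrt (by push_cast; linarith))
            (Real.sqrt_nonneg _) (by positivity)

      _ = 2 * ((Nat.centralBinom s : ℝ) * Real.sqrt (3 * s + 1)) := by push_cast; ring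
      _ ≤ 2 * 4 ^ s := by nlinarith [cb_bound s]
      _ ≤ 2 * 2 ^ (2 * s + 1) := by
          have : (4 : ℝ) ^ s ≤ 2 ^ (2 * s + 1) := by
            rw [pow_succ, pow_mul]
            norm_num
          linarith
  
lemma Lbound (n mv : ℕ) (hm2 : (mv : ℝ) ≤ 2 * n) :
    ((mv * (n + mv).choose n : ℝ)) ≤ 3 * Real.sqrt n * 2 ^ (n + mv) := by
  rcases Nat.eq_zero_or_pos mv with rfl | hmv
  · simp
  have hN1 : 1 ≤ n + mv := by omega
  have hsN : (0 : ℝ) < Real.sqrt (n + mv) := Real.sqrt_pos.2 (by positivity)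
  rw [← mul_le_mul_iff_left₀ hsN]
  have hchoose : ((n + mv).choose n : ℝ) ≤ ((n + mv).choose ((n + mv) / 2) : ℝ) := by
    exact_mod_cast Nat.choose_le_middle n (n + mv)
  have h1 : ((mv * (n + mv).choose n : ℝ)) * Real.sqrt (n + mv)
      ≤ (mv : ℝ) * (2 * 2 ^ (n + mv)) := by
    have := choose_mid (n + mv)
    push_cast
    calc (mv : ℝ) * ((n + mv).choose n : ℝ) * Real.sqrt (n + mv)
        ≤ (mv : ℝ) * (((n + mv).choose ((n + mv) / 2) : ℝ) * Real.sqrt (n + mv)) := by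
          rw [mul_assoc]
          apply mul_le_mul_of_nonneg_left _ (by positivity)
          apply mul_le_mul_of_nonneg_right hchoose (Real.sqrt_nonneg _)
      _ ≤ (mv : ℝ) * (2 * 2 ^ (n + mv)) := by
          apply mul_le_mul_of_nonneg_left _ (by positivity)
          exact_mod_cast this
  refine h1.trans ?_
  -- 2 * mv ≤ 3 * sqrt n * sqrt (n + mv)
  have h2 : 2 * (mv : ℝ) ≤ 3 * (Real.sqrt n * Real.sqrt (n + mv)) := by
    rw [← Real.sqrt_mul (by positivity)]
    have : 2 * (mv : ℝ) = 2 * Real.sqrt ((mv : ℝ) ^ 2) := by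
      rw [Real.sqrt_sq (Nat.cast_nonneg mv)]
    rw [this]
    apply sqrt_helper (by norm_num) (by norm_num)
    have hmv1 : (1 : ℝ) ≤ mv := by exact_mod_cast hmv
    have hnm : (mv : ℝ) ≤ (n : ℝ) + mv := by
      have := Nat.cast_nonneg (α := ℝ) n
      linarith
    nlinarith [sq_nonneg ((mv : ℝ))]
  have hp : (0 : ℝ) < 2 ^ (n + mv) := by positivity
  calc (mv : ℝ) * (2 * 2 ^ (n + mv)) = (2 * mv) * 2 ^ (n + mv) := by ring
    _ ≤ (3 * (Real.sqrt n * Real.sqrt (n + mv))) * 2 ^ (n + mv) := by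
        apply mul_le_mul_of_nonneg_right h2 (le_of_lt hp)
    _ = 3 * Real.sqrt n * 2 ^ (n + mv) * Real.sqrt (n + mv) := by ring

lemma factorial_bound (k : ℕ) (hk : 1 ≤ k) :
    (1 : ℝ) / (Nat.factorial k) ≤ (Real.exp 1 / k) ^ k := by
  have hk0 : (0 : ℝ) < k := by exact_mod_cast hk
  have hf0 : (0 : ℝ) < (Nat.factorial k : ℝ) := by exact_mod_cast k.factorial_pos
  have h1 : ((k : ℝ)) ^ k / (Nat.factorial k) ≤ Real.exp k := by
    calc ((k : ℝ)) ^ k / (Nat.factorial k)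
        ≤ ∑ i ∈ Finset.range (k + 1), (k : ℝ) ^ i / (Nat.factorial i) := by
          apply Finset.single_le_sum (f := fun i => (k : ℝ) ^ i / (Nat.factorial i))
            (fun i _ => by positivity) (Finset.self_mem_range_succ k)
      _ ≤ Real.exp k := Real.sum_le_exp_of_nonneg (le_of_lt hk0) (k + 1)
  have hexp : Real.exp (k : ℝ) = (Real.exp 1) ^ k := by
    rw [← Real.exp_nat_mul, mul_one]
  rw [div_pow]
  rw [div_le_div_iff₀ hf0 (by positivity), one_mul]
  rw [hexp] at h1
  rw [div_le_iff₀ hf0] at h1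
  linarith [h1]

lemma main_prob (n mv : ℕ) [NeZero n] [NeZero mv] (C : ℝ)
    (hC1 : 3 * Real.exp 1 * Real.exp 1 ≤ C)
    (hm2 : (mv : ℝ) ≤ 2 * n) :
    (({ω : Torus n mv → Bool | C * Real.sqrt n < (numCyclesPQ ω 1 1 : ℝ)}).ncard : ℝ)
        / 2 ^ (n * mv)
      ≤ Real.exp (-C⁻¹ * Real.sqrt n) := by
  have he1 : (2 : ℝ) ≤ Real.exp 1 := by
    have := Real.add_one_le_exp 1
    linarith
  have hC0 : (0 : ℝ) < C := by nlinarith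
  have hCge1 : (1 : ℝ) ≤ C := by nlinarith
  have hn0 : 0 < n := Nat.pos_of_ne_zero (NeZero.ne n)
  have hsn : (0 : ℝ) < Real.sqrt n := Real.sqrt_pos.2 (by exact_mod_cast hn0)
  set k : ℕ := Nat.floor (C * Real.sqrt n) + 1 with hk
  have hk1 : 1 ≤ k := by omega
  have hkC : C * Real.sqrt n < k := by
    rw [hk]; push_cast
    exact Nat.lt_floor_add_one _
  have hk0 : (0 : ℝ) < k := lt_of_le_of_lt (by positivity) hkC
  -- event inclusion
  have hsub : {ω : Torus n mv → Bool | C * Real.sqrt n < (numCyclesPQ ω 1 1 : ℝ)}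
      ⊆ {ω : Torus n mv → Bool | k ≤ numCyclesPQ ω 1 1} := by
    intro ω hω
    rw [Set.mem_setOf_eq] at hω ⊢
    rw [hk, Nat.add_one_le_iff, Nat.floor_lt (by positivity)]
    exact hω
  have hmono := Set.ncard_le_ncard hsub (Set.toFinite _)
  have hcount := count_main n mv k
  set L : ℕ := mv * (n + mv).choose n with hL
  set X : ℕ := {ω : Torus n mv → Bool | k ≤ numCyclesPQ ω 1 1}.ncard with hX
  have h2p : (0 : ℝ) < 2 ^ (n * mv) := by positivity
  have h2kp : (0 : ℝ) < 2 ^ (k * (n + mv)) := by positivity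
  -- cast count_main to ℝ
  have hcountR : (X : ℝ) * 2 ^ (k * (n + mv)) ≤ (L.choose k : ℝ) * 2 ^ (n * mv) := by
    exact_mod_cast hcount
  -- the key estimate on (L.choose k)/2^(k(n+mv))
  have hLe : (L : ℝ) ≤ 3 * Real.sqrt n * 2 ^ (n + mv) := by
    rw [hL]; push_cast
    exact_mod_cast Lbound n mv hm2
  have hstep : (L : ℝ) * Real.exp 1 / ((k : ℝ) * 2 ^ (n + mv)) ≤ Real.exp (-1) := by
    have h3 : 3 * Real.exp 1 / C ≤ Real.exp (-1) := by
      rw [Real.exp_neg, div_le_iff₀ hC0]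
      rw [inv_mul_eq_div, le_div_iff₀ (Real.exp_pos 1)]
      nlinarith
    have hkey : (L : ℝ) * Real.exp 1 ≤ (3 * Real.exp 1 / C) * ((k : ℝ) * 2 ^ (n + mv)) := by
      have hCk : 3 * Real.sqrt n * C ≤ 3 * (k : ℝ) := by nlinarith
      calc (L : ℝ) * Real.exp 1 ≤ (3 * Real.sqrt n * 2 ^ (n + mv)) * Real.exp 1 := by
            apply mul_le_mul_of_nonneg_right hLe (le_of_lt (Real.exp_pos 1))
        _ ≤ (3 * Real.exp 1 / C) * ((k : ℝ) * 2 ^ (n + mv)) := by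
            rw [div_mul_eq_mul_div, le_div_iff₀ hC0]
            have h2nm : (0 : ℝ) < 2 ^ (n + mv) := by positivity
            have hmul := mul_le_mul_of_nonneg_right hCk
              (mul_nonneg (Real.exp_pos 1).le h2nm.le)
            nlinarith [hmul]
    rw [div_le_iff₀ (by positivity)]
    calc (L : ℝ) * Real.exp 1 ≤ (3 * Real.exp 1 / C) * ((k : ℝ) * 2 ^ (n + mv)) := hkey
      _ ≤ Real.exp (-1) * ((k : ℝ) * 2 ^ (n + mv)) := by
          apply mul_le_mul_of_nonneg_right h3 (by positivity)
  have hchoose : (L.choose k : ℝ) / 2 ^ (k * (n + mv)) ≤ Real.exp (-(k : ℝ)) := by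
    have h1 : (L.choose k : ℝ) ≤ ((L : ℝ) ^ k) / (Nat.factorial k) := by
      have := Nat.choose_le_pow_div (α := ℝ) k L
      push_cast at this ⊢
      exact this
    have h2 : ((L : ℝ) ^ k) / (Nat.factorial k) ≤ ((L : ℝ) * Real.exp 1 / k) ^ k := by
      rw [div_eq_mul_one_div]
      calc (L : ℝ) ^ k * (1 / (Nat.factorial k))
          ≤ (L : ℝ) ^ k * ((Real.exp 1 / k) ^ k) := by
            apply mul_le_mul_of_nonneg_left (factorial_bound k hk1) (by positivity)
        _ = ((L : ℝ) * Real.exp 1 / k) ^ k := by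
            rw [← mul_pow, div_pow]
            ring_nf
      
    have h3 : ((L : ℝ) * Real.exp 1 / k) ^ k ≤ (Real.exp (-1) * 2 ^ (n + mv)) ^ k := by
      apply pow_le_pow_left₀ (by positivity)
      rw [div_le_iff₀ hk0] at *
      calc (L : ℝ) * Real.exp 1 ≤ Real.exp (-1) * ((k : ℝ) * 2 ^ (n + mv)) := by
            have := hstep
            rw [div_le_iff₀ (by positivity)] at this
            linarith
        _ = Real.exp (-1) * 2 ^ (n + mv) * k := by ring
    have h4 : (Real.exp (-1) * 2 ^ (n + mv)) ^ k = Real.exp (-(k:ℝ)) * 2 ^ (k * (n + mv)) := by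
      rw [mul_pow, ← Real.exp_nat_mul, ← pow_mul]
      rw [mul_neg_one, mul_comm (n + mv) k]
    rw [div_le_iff₀ h2kp]
    calc (L.choose k : ℝ) ≤ ((L : ℝ) ^ k) / (Nat.factorial k) := h1
      _ ≤ ((L : ℝ) * Real.exp 1 / k) ^ k := h2
      _ ≤ (Real.exp (-1) * 2 ^ (n + mv)) ^ k := h3
      _ = Real.exp (-(k:ℝ)) * 2 ^ (k * (n + mv)) := h4
  -- assemble
  rw [div_le_iff₀ h2p]
  have hXle : (X : ℝ) ≤ Real.exp (-(k : ℝ)) * 2 ^ (n * mv) := by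
    rw [div_le_iff₀ h2kp] at hchoose
    have := hcountR
    nlinarith [h2p, h2kp, mul_le_mul_of_nonneg_right hchoose (le_of_lt h2p)]
  have hfinal : Real.exp (-(k : ℝ)) ≤ Real.exp (-C⁻¹ * Real.sqrt n) := by
    rw [Real.exp_le_exp]
    have hinv : C⁻¹ ≤ C := le_trans (inv_le_one_of_one_le₀ hCge1) hCge1
    have : C⁻¹ * Real.sqrt n ≤ C * Real.sqrt n :=
      mul_le_mul_of_nonneg_right hinv (le_of_lt hsn)
    linarith
  calc (({ω : Torus n mv → Bool | C * Real.sqrt n < (numCyclesPQ ω 1 1 : ℝ)}).ncard : ℝ)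
      ≤ (X : ℝ) := by exact_mod_cast hmono
    _ ≤ Real.exp (-(k : ℝ)) * 2 ^ (n * mv) := hXle
    _ ≤ Real.exp (-C⁻¹ * Real.sqrt n) * 2 ^ (n * mv) := by
        apply mul_le_mul_of_nonneg_right hfinal (le_of_lt h2p)


open Filter in
/-- Primary spike, upper bound: if `m(n) = n + ρ√n(1+o(1))` with `ρ > 0`, then there
is `C > 0` with `P(N_{(1,1)} > C n^{1/2}) ≤ exp(-C⁻¹ n^{1/2})` for large `n`. -/
theorem primary_spike_upper (ρ : ℝ) (hρ : 0 < ρ) (m : ℕ → ℕ)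
    (hm : Tendsto (fun n : ℕ => ((m n : ℝ) - n) / Real.sqrt n) atTop (nhds ρ)) :
    ∃ C > 0, ∀ᶠ n : ℕ in atTop,
      prob (n := n) (m := m n)
          (fun ω => C * Real.sqrt n < (numCyclesPQ ω 1 1 : ℝ)) ≤
        Real.exp (-C⁻¹ * Real.sqrt n) := by
  have he1 : (2 : ℝ) ≤ Real.exp 1 := by
    have := Real.add_one_le_exp 1
    linarith
  set C : ℝ := 3 * Real.exp 1 * Real.exp 1 with hC
  have hC0 : 0 < C := by positivity
  refine ⟨C, hC0, ?_⟩
  have hIoo : ∀ᶠ n : ℕ in atTop, ((m n : ℝ) - n) / Real.sqrt n ∈ Set.Ioo (ρ / 2) (ρ + 1) :=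
    hm.eventually (Ioo_mem_nhds (by linarith) (by linarith))
  obtain ⟨N₀, hN₀⟩ := exists_nat_ge ((ρ + 1) ^ 2)
  have hN : ∀ᶠ n : ℕ in atTop, max N₀ 1 ≤ n := eventually_ge_atTop _
  filter_upwards [hIoo, hN] with n hn1 hn2
  have h1 : 1 ≤ n := le_trans (le_max_right _ _) hn2
  have h2 : ((ρ + 1) ^ 2 : ℝ) ≤ (n : ℝ) := by
    refine hN₀.trans ?_
    exact_mod_cast le_trans (le_max_left _ _) hn2
  have hsn : (0 : ℝ) < Real.sqrt n := Real.sqrt_pos.2 (by positivity)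
  have hsge : ρ + 1 ≤ Real.sqrt n := by
    have := Real.sqrt_le_sqrt h2
    rwa [Real.sqrt_sq (by linarith)] at this
  obtain ⟨hlo, hhi⟩ := hn1
  rw [div_lt_iff₀ hsn] at hhi
  rw [lt_div_iff₀ hsn] at hlo
  have hmn : (n : ℝ) < (m n : ℝ) := by nlinarith
  have hm1 : 1 ≤ m n := by
    rcases Nat.eq_zero_or_pos (m n) with h0 | h
    · rw [h0] at hmn
      push_cast at hmn
      have hnn : (0:ℝ) ≤ (n : ℝ) := Nat.cast_nonneg n
      linarith
    · exact h
  have hm2 : ((m n : ℝ)) ≤ 2 * n := by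
    have hfn : Real.sqrt n * Real.sqrt n = (n : ℝ) := Real.mul_self_sqrt (by positivity)
    nlinarith
  haveI : NeZero n := ⟨by omega⟩
  haveI : NeZero (m n) := ⟨by omega⟩
  have := main_prob n (m n) C hC.ge hm2
  rw [prob]
  exact this
end
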